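/- Suppose A₁,…,A_f are v×v (0,1)-matrices, each the incidence matrix of a symmetric group divisible design with parameters (v,k,m,n,λ₁,λ₂) (v = mn), such that A_i(I_m⊗J_n) = (I_m⊗J_n)A_i = (k/m)·J_v for all i, and for all distinct i,j the matrix A_iA_jᵀ has exactly two distinct entries σ ≠ τ. Define A_{i,j} := (1/(σ−τ))·(A_iA_jᵀ − τJ_v). Then the matrices A_{i,j} form a linked system of symmetric group divisible designs with parameters (v, g(k), m, n, g(λ₁), g(λ₂)) and linking parameters g(σ), g(τ), where g(x) := ((k−λ₁)x + (λ₁−λ₂)k²/m + λ₂k² − 2τk² + τ²v)/(σ−τ)². -/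

import Mathlib

open Matrix

noncomputable section

/-- The all-ones matrix `J_v` (with `v = m·n`, indexed by `Fin m × Fin n`). -/
def Jmat (m n : ℕ) : Matrix (Fin m × Fin n) (Fin m × Fin n) ℝ :=
  Matrix.of fun _ _ => 1

/-- The block-diagonal matrix `I_m ⊗ J_n` (indexed by `Fin m × Fin n`). -/
def Kmat (m n : ℕ) : Matrix (Fin m × Fin n) (Fin m × Fin n) ℝ :=
  Matrix.of fun p q => if p.1 = q.1 then 1 else 0

/-- From symmetric GDDs `A₁,…,A_f` with block row/column sums `k/m` such that each
`A_iA_jᵀ` (i ≠ j) has exactly two entries `σ ≠ τ`, the matrices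
`A_{i,j} = (A_iA_jᵀ − τJ)/(σ−τ)` form a linked system of symmetric GDDs with
parameters `(v, g(k), m, n, g(λ₁), g(λ₂))` and linking parameters `g(σ), g(τ)`,
where `g(x) = ((k−λ₁)x + (λ₁−λ₂)k²/m + λ₂k² − 2τk² + τ²v)/(σ−τ)²`. -/
theorem stmt15 (f m n : ℕ) (hm : 2 ≤ m) (hn : 2 ≤ n)
    (k l1 l2 σ τ : ℝ) (hστ : σ ≠ τ)
    (A : Fin f → Matrix (Fin m × Fin n) (Fin m × Fin n) ℝ)
    (h01 : ∀ i p q, A i p q = 0 ∨ A i p q = 1)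
    (hGDD : ∀ i, A i * (A i)ᵀ =
        k • (1 : Matrix (Fin m × Fin n) (Fin m × Fin n) ℝ)
          + l1 • (Kmat m n - 1) + l2 • (Jmat m n - Kmat m n) ∧
      (A i)ᵀ * A i =
        k • (1 : Matrix (Fin m × Fin n) (Fin m × Fin n) ℝ)
          + l1 • (Kmat m n - 1) + l2 • (Jmat m n - Kmat m n))
    (hblock : ∀ i, A i * Kmat m n = (k / m) • Jmat m n ∧
      Kmat m n * A i = (k / m) • Jmat m n)
    (htwo : ∀ i j, i ≠ j → ∀ p q,
      (A i * (A j)ᵀ) p q = σ ∨ (A i * (A j)ᵀ) p q = τ)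
    (B : Fin f → Fin f → Matrix (Fin m × Fin n) (Fin m × Fin n) ℝ)
    (hB : ∀ i j, i ≠ j → B i j = (σ - τ)⁻¹ • (A i * (A j)ᵀ - τ • Jmat m n))
    (g : ℝ → ℝ)
    (hg : ∀ x, g x = ((k - l1) * x + (l1 - l2) * k ^ 2 / m + l2 * k ^ 2
      - 2 * τ * k ^ 2 + τ ^ 2 * ((m : ℝ) * n)) / (σ - τ) ^ 2) :
    (∀ i j, i ≠ j → ∀ p q, B i j p q = 0 ∨ B i j p q = 1) ∧
    (∀ i j, i ≠ j → (B i j)ᵀ = B j i) ∧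
    (∀ i j, i ≠ j → B i j * (B i j)ᵀ =
      g k • (1 : Matrix (Fin m × Fin n) (Fin m × Fin n) ℝ)
        + g l1 • (Kmat m n - 1) + g l2 • (Jmat m n - Kmat m n)) ∧
    (∀ i j l, i ≠ j → j ≠ l → i ≠ l →
      B i j * B j l = g σ • B i l + g τ • (Jmat m n - B i l)) := by
  have hm0 : (m : ℝ) ≠ 0 := Nat.cast_ne_zero.mpr (by omega)
  have hn0 : (n : ℝ) ≠ 0 := Nat.cast_ne_zero.mpr (by omega)
  have hστ' : σ - τ ≠ 0 := sub_ne_zero.mpr hστ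
  set J : Matrix (Fin m × Fin n) (Fin m × Fin n) ℝ := Jmat m n with hJdef
  set K : Matrix (Fin m × Fin n) (Fin m × Fin n) ℝ := Kmat m n with hKdef
  -- basic identities
  have hJJ : J * J = ((m : ℝ) * n) • J := by
    ext p q
    simp [hJdef, Jmat, Matrix.mul_apply, Finset.card_univ]
  have hKJ : K * J = (n : ℝ) • J := by
    ext p q
    simp only [hJdef, hKdef, Matrix.mul_apply, Kmat, Jmat, Matrix.of_apply, mul_one,
      Fintype.sum_prod_type, Matrix.smul_apply, smul_eq_mul]
    simp [apply_ite (Finset.card), apply_ite (Nat.cast (R := ℝ)), Finset.sum_ite_eq]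
  have hJK : J * K = (n : ℝ) • J := by
    ext p q
    simp only [hJdef, hKdef, Matrix.mul_apply, Kmat, Jmat, Matrix.of_apply, one_mul,
      Fintype.sum_prod_type, Matrix.smul_apply, smul_eq_mul]
    simp [apply_ite (Finset.card), apply_ite (Nat.cast (R := ℝ)), Finset.sum_ite_eq']
  have hJT : Jᵀ = J := by ext p q; simp [hJdef, Jmat]
  have hKT : Kᵀ = K := by
    ext p q
    simp only [hKdef, Kmat, transpose_apply, Matrix.of_apply]
    simp [eq_comm]
  -- row/column sums
  have hAJ : ∀ i, A i * J = k • J := by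
    intro i
    have h1 : A i * K * J = (k / m) • (J * J) := by
      rw [(hblock i).1, Matrix.smul_mul]
    rw [hJJ, mul_assoc, hKJ, Matrix.mul_smul, smul_smul] at h1
    have h2 := congrArg (fun X => (n:ℝ)⁻¹ • X) h1
    simp only [smul_smul] at h2
    rwa [inv_mul_cancel₀ hn0, one_smul,
      show (n:ℝ)⁻¹ * (k / m * ((m:ℝ) * n)) = k by field_simp] at h2
  have hJA : ∀ i, J * A i = k • J := by
    intro i
    have h1 : J * (K * A i) = (k / m) • (J * J) := by
      rw [(hblock i).2, Matrix.mul_smul]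
    rw [hJJ, ← mul_assoc, hJK, Matrix.smul_mul, smul_smul] at h1
    have h2 := congrArg (fun X => (n:ℝ)⁻¹ • X) h1
    simp only [smul_smul] at h2
    rwa [inv_mul_cancel₀ hn0, one_smul,
      show (n:ℝ)⁻¹ * (k / m * ((m:ℝ) * n)) = k by field_simp] at h2
  have hJAT : ∀ i, J * (A i)ᵀ = k • J := by
    intro i
    have := congrArg Matrix.transpose (hAJ i)
    rwa [Matrix.transpose_mul, Matrix.transpose_smul, hJT] at this
  have hATJ : ∀ i, (A i)ᵀ * J = k • J := by
    intro i
    have := congrArg Matrix.transpose (hJA i)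
    rwa [Matrix.transpose_mul, Matrix.transpose_smul, hJT] at this
  have hKAT : ∀ i, K * (A i)ᵀ = (k / m) • J := by
    intro i
    have := congrArg Matrix.transpose (hblock i).1
    rwa [Matrix.transpose_mul, Matrix.transpose_smul, hJT, hKT] at this
  -- products with J
  have hCJ : ∀ i j, (A i * (A j)ᵀ) * J = (k * k) • J := by
    intro i j
    rw [mul_assoc, hATJ j, Matrix.mul_smul, hAJ i, smul_smul]
  have hJC : ∀ i j, J * (A i * (A j)ᵀ) = (k * k) • J := by
    intro i j
    rw [← mul_assoc, hJA i, Matrix.smul_mul, hJAT j, smul_smul]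
  -- M * Aᵀ
  have hMA : ∀ j, (k • (1 : Matrix (Fin m × Fin n) (Fin m × Fin n) ℝ)
      + l1 • (K - 1) + l2 • (J - K)) * (A j)ᵀ
      = (k - l1) • (A j)ᵀ + (l1 * (k / m) + l2 * k - l2 * (k / m)) • J := by
    intro j
    simp only [add_mul, sub_mul, Matrix.smul_mul, one_mul, hKAT j, hJAT j]
    module
  -- the key product identity
  have hCC : ∀ i j l, (A i * (A j)ᵀ) * (A j * (A l)ᵀ)
      = (k - l1) • (A i * (A l)ᵀ)
        + ((l1 * (k / m) + l2 * k - l2 * (k / m)) * k) • J := by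
    intro i j l
    rw [mul_assoc, ← mul_assoc (A j)ᵀ, (hGDD j).2, hMA l, mul_add,
      Matrix.mul_smul, Matrix.mul_smul, hAJ i, smul_smul]
  -- the master product formula for B i j * B j l
  have hBB : ∀ i j l, i ≠ j → j ≠ l → B i j * B j l
      = ((σ - τ)⁻¹ * (σ - τ)⁻¹) • ((k - l1) • (A i * (A l)ᵀ)
        + ((l1 * (k / m) + l2 * k - l2 * (k / m)) * k
          - τ * (k * k) - τ * (k * k) + τ * τ * ((m : ℝ) * n)) • J) := by
    intro i j l hij hjl
    rw [hB i j hij, hB j l hjl, Matrix.smul_mul, Matrix.mul_smul, smul_smul]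
    congr 1
    rw [sub_mul, mul_sub, mul_sub, Matrix.smul_mul, Matrix.mul_smul,
      Matrix.mul_smul, Matrix.smul_mul, smul_smul, hCC i j l, hCJ i j, hJC j l, hJJ]
    module
  -- transpose part
  have hT : ∀ i j, i ≠ j → (B i j)ᵀ = B j i := by
    intro i j hij
    rw [hB i j hij, hB j i hij.symm, Matrix.transpose_smul, Matrix.transpose_sub,
      Matrix.transpose_mul, Matrix.transpose_transpose, Matrix.transpose_smul, hJT]
  refine ⟨?_, hT, ?_, ?_⟩
  · intro i j hij p q
    rw [hB i j hij]
    have hJpq : J p q = 1 := rfl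
    simp only [Matrix.smul_apply, Matrix.sub_apply, smul_eq_mul, hJpq, mul_one]
    rcases htwo i j hij p q with h | h <;> rw [h]
    · right; field_simp
    · left; simp
  · intro i j hij
    rw [hT i j hij, hBB i j i hij hij.symm, (hGDD i).1, hg k, hg l1, hg l2]
    match_scalars <;> field_simp <;> ring
  · intro i j l hij hjl hil
    rw [hBB i j l hij hjl, hB i l hil, hg σ, hg τ]
    match_scalars <;> field_simp <;> ring

end
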